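/- Let (M_x)_{x≥0} be the counting process of a Poisson process with intensity measure defined by x ↦ -N log p_x for a survival function p_x of a non-negative random variable with continuous cdf. Then the estimator m̂ = ∫_0^∞ (1 - 1/N)^{M_x} dx satisfies E[m̂] = ∫_0^∞ p_x dx = E[X], i.e., m̂ is unbiased. -/

import Mathlib

open MeasureTheory ProbabilityTheory Set

/-- Let `X ≥ 0` have survival function `p x = P(X > x)`, and let `(M_x)` be the counting
process with `M_x ~ Poisson(-N log p_x)`. Then the ideal estimator
`m̂ = ∫_0^∞ (1-1/N)^{M_x} dx` is unbiased: `E[m̂] = ∫_0^∞ p_x dx = E[X]`. -/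
theorem stmt_5 {Ω : Type*} [MeasureSpace Ω] [IsProbabilityMeasure (ℙ : Measure Ω)]
    (X : Ω → ℝ) (hX : Measurable X) (hXpos : ∀ ω, 0 ≤ X ω)
    (p : ℝ → ℝ) (hp : ∀ x, p x = (ℙ {ω | x < X ω}).toReal)
    (N : ℕ) (hN : 2 ≤ N)
    (M : ℝ → Ω → ℕ) (hM : Measurable (fun q : ℝ × Ω => M q.1 q.2))
    (hlaw : ∀ x : ℝ, 0 < x → 0 < p x → ∀ k : ℕ,
      ℙ {ω | M x ω = k} = ENNReal.ofReal
        (Real.exp ((N:ℝ) * Real.log (p x)) * (-((N:ℝ) * Real.log (p x))) ^ k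
          / (Nat.factorial k))) :
    (∫⁻ ω, (∫⁻ x in Ioi (0:ℝ),
        (if p x = 0 then 0 else ENNReal.ofReal ((1 - 1/(N:ℝ)) ^ (M x ω)))) ∂ℙ)
      = ∫⁻ x in Ioi (0:ℝ), ENNReal.ofReal (p x)
    ∧ (∫⁻ x in Ioi (0:ℝ), ENNReal.ofReal (p x)) = ∫⁻ ω, ENNReal.ofReal (X ω) ∂ℙ := by
  have hN0 : (N:ℝ) ≠ 0 := by
    have : (2:ℝ) ≤ (N:ℝ) := by exact_mod_cast hN
    linarith
  set t : ℝ := 1 - 1/(N:ℝ) with ht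
  have htnn : 0 ≤ t := by
    have : (2:ℝ) ≤ (N:ℝ) := by exact_mod_cast hN
    have h1 : 1/(N:ℝ) ≤ 1/2 := by
      apply div_le_div_of_nonneg_left <;> linarith
    simp only [ht]; linarith
  -- measurability of p
  have hF : Measurable fun x : ℝ => ℙ {ω | x < X ω} := by
    have hanti : Antitone fun x : ℝ => ℙ {ω | x < X ω} := fun a b hab =>
      measure_mono (fun ω h => lt_of_le_of_lt hab h)
    exact hanti.measurable
  have hpm : Measurable p := by
    have : Measurable fun x => (ℙ {ω | x < X ω}).toReal := hF.ennreal_toReal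
    have hpe : p = fun x => (ℙ {ω | x < X ω}).toReal := funext hp
    rw [hpe]; exact this
  have hpnn : ∀ x, 0 ≤ p x := fun x => by rw [hp]; exact ENNReal.toReal_nonneg
  have hple : ∀ x, p x ≤ 1 := fun x => by
    rw [hp]
    exact ENNReal.toReal_le_of_le_ofReal zero_le_one (by simpa using prob_le_one)
  -- key computation for fixed x with 0 < p x
  have key : ∀ x : ℝ, x ∈ Ioi (0:ℝ) →
      (∫⁻ ω, (if p x = 0 then 0 else ENNReal.ofReal (t ^ (M x ω))) ∂ℙ)
        = ENNReal.ofReal (p x) := by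
    intro x hx
    by_cases hpx : p x = 0
    · simp [hpx]
    · have hpx' : 0 < p x := lt_of_le_of_ne (hpnn x) (Ne.symm hpx)
      simp only [hpx, if_false]
      have hMx : Measurable (M x) := hM.comp (measurable_prodMk_left)
      have hmeas : Measurable fun n : ℕ => ENNReal.ofReal (t ^ n) := measurable_from_nat
      calc ∫⁻ ω, ENNReal.ofReal (t ^ (M x ω)) ∂ℙ
          = ∫⁻ n, ENNReal.ofReal (t ^ n) ∂(Measure.map (M x) ℙ) :=
            (lintegral_map hmeas hMx).symm
        _ = ∑' n : ℕ, ENNReal.ofReal (t ^ n) * (Measure.map (M x) ℙ) {n} :=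
            lintegral_countable' _
        _ = ENNReal.ofReal (p x) := by
            have hmap : ∀ k : ℕ, (Measure.map (M x) ℙ) {k} = ℙ {ω | M x ω = k} := by
              intro k
              rw [Measure.map_apply hMx (measurableSet_singleton k)]
              rfl
            set c : ℝ := (N:ℝ) * Real.log (p x) with hc
            have hcle : c ≤ 0 := by
              have hlog : Real.log (p x) ≤ 0 := Real.log_nonpos (hpnn x) (hple x)
              have : (0:ℝ) ≤ (N:ℝ) := Nat.cast_nonneg N
              exact mul_nonpos_of_nonneg_of_nonpos this hlog
            have hterm : ∀ k : ℕ,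
                ENNReal.ofReal (t ^ k) * (Measure.map (M x) ℙ) {k}
                  = ENNReal.ofReal (Real.exp c * ((t * (-c)) ^ k / (Nat.factorial k))) := by
              intro k
              rw [hmap k, hlaw x hx hpx' k, ← ENNReal.ofReal_mul (by positivity)]
              congr 1
              rw [mul_pow]
              field_simp
              ring
            rw [tsum_congr hterm]
            have hnn : ∀ k : ℕ, 0 ≤ Real.exp c * ((t * (-c)) ^ k / (Nat.factorial k)) := by
              intro k
              have : (0:ℝ) ≤ t * (-c) := mul_nonneg htnn (by linarith)
              positivity
            have hsum : Summable fun k : ℕ => Real.exp c * ((t * (-c)) ^ k / (Nat.factorial k)) :=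
              (Real.summable_pow_div_factorial (t * (-c))).mul_left _
            rw [← ENNReal.ofReal_tsum_of_nonneg hnn hsum]
            congr 1
            rw [tsum_mul_left]
            have hexp : ∑' k : ℕ, (t * (-c)) ^ k / (Nat.factorial k) = Real.exp (t * (-c)) := by
              rw [Real.exp_eq_exp_ℝ, NormedSpace.exp_eq_tsum_div]
            rw [hexp, ← Real.exp_add]
            have : c + t * (-c) = Real.log (p x) := by
              simp only [ht, hc]
              field_simp
              ring
            rw [this, Real.exp_log hpx']
  -- measurability for swap
  have hg : Measurable fun q : Ω × ℝ =>
      (if p q.2 = 0 then 0 else ENNReal.ofReal (t ^ (M q.2 q.1))) := by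
    have hs : MeasurableSet {q : Ω × ℝ | p q.2 = 0} :=
      (hpm.comp measurable_snd) (measurableSet_singleton 0)
    refine Measurable.ite hs measurable_const ?_
    exact (measurable_from_nat (f := fun n : ℕ => ENNReal.ofReal (t ^ n))).comp
      (hM.comp measurable_swap)
  have hswap : (∫⁻ ω, (∫⁻ x in Ioi (0:ℝ),
        (if p x = 0 then 0 else ENNReal.ofReal (t ^ (M x ω)))) ∂ℙ)
      = ∫⁻ x in Ioi (0:ℝ), (∫⁻ ω, (if p x = 0 then 0
          else ENNReal.ofReal (t ^ (M x ω))) ∂ℙ) :=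
    lintegral_lintegral_swap hg.aemeasurable
  constructor
  · rw [hswap]
    exact setLIntegral_congr_fun measurableSet_Ioi (fun x hx => key x hx)
  · have layer := lintegral_eq_lintegral_meas_lt ℙ
      (Filter.Eventually.of_forall hXpos) hX.aemeasurable
    rw [layer]
    refine setLIntegral_congr_fun measurableSet_Ioi ?_
    intro x _
    beta_reduce
    rw [hp x, ENNReal.ofReal_toReal (measure_ne_top _ _)]
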